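/- arXiv:1006.4491 — 2 statements merged into one kernel-verified Lean document; each statement's English description precedes it below -/
import Mathlib

section
/- Let μ be an atomless Borel probability measure on the circle S¹ = ℝ/ℤ and let v : S¹ → ℝ be a Borel measurable function. Then for all but countably many values of t ∈ [0,1], the push-forward measure (Id + t·v)_# μ has no atom. -/
open MeasureTheory

/-- For an atomless Borel probability measure `μ` on the circle and a Borel
measurable `v : S¹ → ℝ`, for all but countably many `t ∈ [0,1]` the push-forward
of `μ` by `x ↦ x + t·v(x)` has no atom. -/
theorem atomless_pushforward_countable_exceptions
    (μ : Measure UnitAddCircle) [IsProbabilityMeasure μ] [NullSingletonClass μ]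
    (v : UnitAddCircle → ℝ) (hv : Measurable v) :
    Set.Countable {t ∈ Set.Icc (0 : ℝ) 1 |
      ¬ ∀ s : UnitAddCircle,
        (μ.map fun x => x + ((t * v x : ℝ) : UnitAddCircle)) {s} = 0} := by
  have hfm : ∀ t : ℝ,
      Measurable fun x : UnitAddCircle => x + ((t * v x : ℝ) : UnitAddCircle) :=
    fun t => measurable_id.add (AddCircle.measurable_mk'.comp (measurable_const.mul hv))
  set T : Set ℝ := {t ∈ Set.Icc (0 : ℝ) 1 |
      ¬ ∀ s : UnitAddCircle,
        (μ.map fun x => x + ((t * v x : ℝ) : UnitAddCircle)) {s} = 0} with hT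
  have hsel : ∀ t : T, ∃ s : UnitAddCircle,
      μ ((fun x => x + (((t : ℝ) * v x : ℝ) : UnitAddCircle)) ⁻¹' {s}) ≠ 0 := by
    intro t
    obtain ⟨-, ht⟩ := t.2
    push_neg at ht
    obtain ⟨s, hs⟩ := ht
    exact ⟨s, by rwa [Measure.map_apply (hfm _) (measurableSet_singleton s)] at hs⟩
  choose s hs using hsel
  set A : T → Set UnitAddCircle :=
    fun t => (fun x => x + (((t : ℝ) * v x : ℝ) : UnitAddCircle)) ⁻¹' {s t} with hA
  have hmble : ∀ t : T, MeasurableSet (A t) := fun t => (hfm _) (measurableSet_singleton _)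
  have hdisj : Pairwise (Function.onFun (MeasureTheory.AEDisjoint μ) A) := by
    intro t t' htt'
    have hne : (t : ℝ) - (t' : ℝ) ≠ 0 := by
      intro h
      exact htt' (Subtype.ext (by linarith [sub_eq_zero.mp h]))
    obtain ⟨c, hc⟩ := QuotientAddGroup.mk_surjective (s t - s t')
    have hcount : (A t ∩ A t').Countable := by
      apply Set.Countable.mono ?_
        (Set.countable_range fun m : ℤ =>
          s t - ((((t : ℝ) * ((c + m) / ((t : ℝ) - (t' : ℝ))) : ℝ) : UnitAddCircle)))
      rintro x ⟨hx1, hx2⟩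
      simp only [hA, Set.mem_preimage, Set.mem_singleton_iff] at hx1 hx2
      have key : ((((t : ℝ) - (t' : ℝ)) * v x - c : ℝ) : UnitAddCircle) = 0 := by
        have h1 : (((t : ℝ) * v x : ℝ) : UnitAddCircle) - (((t' : ℝ) * v x : ℝ) : UnitAddCircle)
            = s t - s t' := by
          rw [← hx1, ← hx2]; abel
        have hcoe : ((((t : ℝ) - (t' : ℝ)) * v x : ℝ) : UnitAddCircle) = s t - s t' := by
          rw [show ((t : ℝ) - (t' : ℝ)) * v x
              = (t : ℝ) * v x - (t' : ℝ) * v x from by ring,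
            QuotientAddGroup.mk_sub, h1]
        rw [QuotientAddGroup.mk_sub, sub_eq_zero, hcoe, hc]
      obtain ⟨n, hn⟩ := (AddCircle.coe_eq_zero_iff (1 : ℝ)).mp key
      rw [zsmul_eq_mul, mul_one] at hn
      have hvx : v x = (c + n) / ((t : ℝ) - (t' : ℝ)) := by
        field_simp
        linear_combination -hn
      refine ⟨n, ?_⟩
      show s t - ((((t : ℝ) * ((c + n) / ((t : ℝ) - (t' : ℝ))) : ℝ)) : UnitAddCircle) = x
      rw [← hvx, sub_eq_iff_eq_add]
      exact hx1.symm
    exact hcount.measure_zero μ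
  have hcnt := MeasureTheory.Measure.countable_meas_pos_of_disjoint_iUnion₀
    (μ := μ) (fun t => (hmble t).nullMeasurableSet) hdisj
  have huniv : {i : T | 0 < μ (A i)} = Set.univ :=
    Set.eq_univ_of_forall fun t => pos_iff_ne_zero.mpr (hs t)
  rw [huniv, Set.countable_univ_iff] at hcnt
  exact Set.countable_coe_iff.mp hcnt
end

section
/- Let λ be Haar measure on ℝ/ℤ, d ≥ 2 an integer, and v ∈ L²(λ). Then (Φ_d)_#((Id + t·v)_# λ) = (1/d) Σ_{j=0}^{d−1} (Id + d·t·v_j)_# λ, where Φ_d(x) = dx and v_j(x) = v((x+j)/d). -/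
open MeasureTheory
open scoped ENNReal

instance : Fact ((0 : ℝ) < 1) := ⟨one_pos⟩

/-- The canonical lift of a point of the circle `ℝ/ℤ` to `[0,1)`. -/
noncomputable def circleLift (x : UnitAddCircle) : ℝ :=
  (AddCircle.equivIco 1 0 x : ℝ)

lemma measurable_circleLift : Measurable circleLift := by
  have : circleLift = (fun y : Set.Ico (0:ℝ) (0+1) => (y : ℝ)) ∘ (AddCircle.measurableEquivIco 1 0) := by
    funext x; simp [circleLift, AddCircle.measurableEquivIco]; rfl
  rw [this]
  exact measurable_subtype_coe.comp (AddCircle.measurableEquivIco 1 0).measurable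

lemma coe_circleLift (x : UnitAddCircle) : ((circleLift x : ℝ) : UnitAddCircle) = x := by
  have := (AddCircle.equivIco 1 0).symm_apply_apply x
  simpa [circleLift, AddCircle.equivIco, QuotientAddGroup.equivIcoMod] using this

lemma circleLift_coe {r : ℝ} (hr : r ∈ Set.Ico (0:ℝ) 1) : circleLift (r : UnitAddCircle) = r := by
  have h := AddCircle.coe_equivIco_mk_apply (p := (1:ℝ)) r
  simp only [circleLift]
  rw [h, div_one, mul_one, Int.fract_eq_self.2 ⟨hr.1, hr.2⟩]

lemma map_finset_sum_measure {ι α β : Type*} [MeasurableSpace α] [MeasurableSpace β]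
    (s : Finset ι) (μ : ι → Measure α) {f : α → β} (hf : Measurable f) :
    (∑ j ∈ s, μ j).map f = ∑ j ∈ s, (μ j).map f := by
  induction s using Finset.cons_induction with
  | empty => simp
  | cons j s hj ih => rw [Finset.sum_cons, Finset.sum_cons, Measure.map_add _ _ hf, ih]

lemma sum_restrict_Ico (d : ℕ) (hd : 0 < d) :
    ∑ j ∈ Finset.range d, (volume : Measure ℝ).restrict (Set.Ico ((j:ℝ)/d) ((j+1)/d))
      = volume.restrict (Set.Ico (0:ℝ) 1) := by
  have hd0 : (0:ℝ) < d := Nat.cast_pos.2 hd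
  have gen : ∀ n : ℕ, ∑ j ∈ Finset.range n, (volume : Measure ℝ).restrict
      (Set.Ico ((j:ℝ)/d) ((j+1)/d)) = volume.restrict (Set.Ico (0:ℝ) ((n:ℝ)/d)) := by
    intro n
    induction n with
    | zero => simp
    | succ n ih =>
        rw [Finset.sum_range_succ, ih, ← Measure.restrict_union
          (Set.Ico_disjoint_Ico_same) measurableSet_Ico,
          Set.Ico_union_Ico_eq_Ico (by positivity) (by gcongr; linarith)]
        push_cast
        ring_nf
  have := gen d
  rwa [div_self hd0.ne'] at this

lemma map_branch_real (d : ℕ) (hd : 0 < d) (j : ℕ) :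
    Measure.map (fun r : ℝ => (r + j)/d) (volume.restrict (Set.Ico (0:ℝ) 1))
      = ENNReal.ofReal d • volume.restrict (Set.Ico ((j:ℝ)/d) ((j+1)/d)) := by
  have hd0 : (0:ℝ) < d := Nat.cast_pos.2 hd
  have hψ : Measurable (fun r : ℝ => (r + j)/d) := (measurable_add_const _).div_const _
  have hpre : (fun r : ℝ => (r + j)/d) ⁻¹' Set.Ico ((j:ℝ)/d) ((j+1)/d) = Set.Ico (0:ℝ) 1 := by
    ext r
    simp only [Set.mem_preimage, Set.mem_Ico, div_le_div_iff_of_pos_right hd0,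
      div_lt_div_iff_of_pos_right hd0]
    constructor <;> intro h <;> constructor <;> linarith [h.1, h.2]
  have hmap : Measure.map (fun r : ℝ => (r + j)/d) (volume : Measure ℝ)
      = ENNReal.ofReal d • volume := by
    have hcomp : (fun r : ℝ => (r + j)/d) = (fun y : ℝ => (d:ℝ)⁻¹ * y) ∘ (fun r : ℝ => r + j) := by
      funext r; simp [div_eq_inv_mul]
    rw [hcomp, ← Measure.map_map (measurable_const_mul _) (measurable_add_const _),
      map_add_right_eq_self volume (j:ℝ), Real.map_volume_mul_left (by positivity : ((d:ℝ)⁻¹) ≠ 0),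
      inv_inv, abs_of_pos hd0]
  rw [← hpre, ← Measure.restrict_map hψ measurableSet_Ico, hmap, Measure.restrict_smul]

lemma circle_volume_decomp (d : ℕ) (hd : 0 < d) :
    (volume : Measure UnitAddCircle) = (d : ℝ≥0∞)⁻¹ • ∑ j ∈ Finset.range d,
      (volume : Measure UnitAddCircle).map
        (fun x => ((((circleLift x + j) / d : ℝ)) : UnitAddCircle)) := by
  have φmeas : ∀ j : ℕ, Measurable
      (fun x : UnitAddCircle => ((((circleLift x + j) / d : ℝ)) : UnitAddCircle)) := fun j =>
    AddCircle.measurable_mk'.comp ((measurable_circleLift.add_const _).div_const _)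
  have hIco : (volume : Measure UnitAddCircle)
      = Measure.map ((↑) : ℝ → UnitAddCircle) (volume.restrict (Set.Ico (0:ℝ) 1)) := by
    rw [Measure.restrict_congr_set MeasureTheory.Ico_ae_eq_Ioc]
    have := (AddCircle.measurePreserving_mk 1 0).map_eq
    rw [zero_add] at this
    exact this.symm
  have step : ∀ j ∈ Finset.range d,
      (volume : Measure UnitAddCircle).map
        (fun x => ((((circleLift x + j) / d : ℝ)) : UnitAddCircle))
      = ENNReal.ofReal d •
          Measure.map ((↑) : ℝ → UnitAddCircle)
            (volume.restrict (Set.Ico ((j:ℝ)/d) ((j+1)/d))) := by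
    intro j _
    rw [hIco, Measure.map_map (φmeas j) AddCircle.measurable_mk']
    have hcong : Measure.map
        ((fun x : UnitAddCircle => ((((circleLift x + j) / d : ℝ)) : UnitAddCircle))
          ∘ ((↑) : ℝ → UnitAddCircle)) (volume.restrict (Set.Ico (0:ℝ) 1))
        = Measure.map (fun r : ℝ => (((r + j)/d : ℝ) : UnitAddCircle))
            (volume.restrict (Set.Ico (0:ℝ) 1)) := by
      apply Measure.map_congr
      filter_upwards [ae_restrict_mem measurableSet_Ico] with r hr
      simp [Function.comp, circleLift_coe hr]
    have hsplit : (fun r : ℝ => (((r + j)/d : ℝ) : UnitAddCircle))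
        = ((↑) : ℝ → UnitAddCircle) ∘ (fun r : ℝ => (r + j)/d) := rfl
    rw [hcong, hsplit, ← Measure.map_map AddCircle.measurable_mk'
      ((measurable_add_const _).div_const _), map_branch_real d hd j, Measure.map_smul]
  rw [Finset.sum_congr rfl step, ← Finset.smul_sum, ← map_finset_sum_measure _ _ AddCircle.measurable_mk',
    sum_restrict_Ico d hd, ← hIco, smul_smul, ENNReal.ofReal_natCast,
    ENNReal.inv_mul_cancel (by exact_mod_cast hd.ne') (ENNReal.natCast_ne_top d), one_smul]


lemma coe_nat_circle (j : ℕ) : (((j : ℝ)) : UnitAddCircle) = 0 := by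
  rw [AddCircle.coe_eq_zero_iff]
  exact ⟨j, by simp⟩

/-- Pushing `λ + tv` forward by the degree `d` covering decomposes as the average
over the `d` branches: `(Φ_d)_#((Id+tv)_#λ) = (1/d) Σ_j (Id + d·t·v_j)_# λ` with
`v_j(x) = v((x+j)/d)`. -/
theorem pushforward_model_branch_decomposition
    (d : ℕ) (hd : 2 ≤ d) (t : ℝ) (v : UnitAddCircle → ℝ) (hv : Measurable v)
    (hv2 : MemLp v 2 (volume : Measure UnitAddCircle)) :
    ((volume : Measure UnitAddCircle).map
        fun x => x + ((t * v x : ℝ) : UnitAddCircle)).map (fun x => d • x)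
      = (d : ℝ≥0∞)⁻¹ • ∑ j ∈ Finset.range d,
          (volume : Measure UnitAddCircle).map
            fun x => x + ((d * t * v ((((circleLift x + j) / d : ℝ)) : UnitAddCircle) : ℝ)
              : UnitAddCircle) := by
  have hd0 : 0 < d := by omega
  have hd0' : ((d:ℝ)) ≠ 0 := by positivity
  have hmsmul : Measurable (fun x : UnitAddCircle => d • x) :=
    (continuous_nsmul d).measurable
  have hm1 : Measurable (fun x : UnitAddCircle => x + ((t * v x : ℝ) : UnitAddCircle)) :=
    measurable_id.add (AddCircle.measurable_mk'.comp (hv.const_mul t))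
  have hmf : Measurable (fun x : UnitAddCircle => d • x + ((d * t * v x : ℝ) : UnitAddCircle)) :=
    (hmsmul.add (AddCircle.measurable_mk'.comp (hv.const_mul _)))
  have φmeas : ∀ j : ℕ, Measurable
      (fun x : UnitAddCircle => ((((circleLift x + j) / d : ℝ)) : UnitAddCircle)) := fun j =>
    AddCircle.measurable_mk'.comp ((measurable_circleLift.add_const _).div_const _)
  have hLHS : ((volume : Measure UnitAddCircle).map
        fun x => x + ((t * v x : ℝ) : UnitAddCircle)).map (fun x => d • x)
      = (volume : Measure UnitAddCircle).map
          (fun x => d • x + ((d * t * v x : ℝ) : UnitAddCircle)) := by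
    rw [Measure.map_map hmsmul hm1]
    congr 1
    funext x
    show d • (x + ((t * v x : ℝ) : UnitAddCircle)) = _
    rw [smul_add, ← AddCircle.coe_nsmul]
    congr 2
    rw [nsmul_eq_mul]; ring
  rw [hLHS]
  conv_lhs => rw [circle_volume_decomp d hd0]
  rw [Measure.map_smul, map_finset_sum_measure _ _ hmf]
  congr 1
  refine Finset.sum_congr rfl fun j hj => ?_
  rw [Measure.map_map hmf (φmeas j)]
  congr 1
  funext x
  show d • ((((circleLift x + j) / d : ℝ)) : UnitAddCircle)
      + ((d * t * v ((((circleLift x + j) / d : ℝ)) : UnitAddCircle) : ℝ) : UnitAddCircle) = _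
  congr 1
  rw [← AddCircle.coe_nsmul, nsmul_eq_mul, mul_div_cancel₀ _ hd0', AddCircle.coe_add,
    coe_circleLift, coe_nat_circle, add_zero]
end
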